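/- (Three-term decomposition of mutual information) Let (X^n, Y^n) be jointly distributed random sequences with finite alphabets. Then I(X^n; Y^n) = I(DX^n→Y^n) + I(DY^n→X^n) + I(X^n→Y^n‖DX^n), i.e., mutual information equals the sum of the two time-shifted directed informations and the instantaneous information. -/
import Mathlib


open Finset

noncomputable section

-- Probability of the event `E` under the pmf `p` on a finite sample space `Ω`.
open Classical in
def pr {Ω : Type*} [Fintype Ω] (p : Ω → ℝ) (E : Ω → Prop) : ℝ :=
  ∑ ω, if E ω then p ω else 0

-- Shannon entropy `H(U)` (pointwise form).
def entropy {Ω α : Type*} [Fintype Ω] (p : Ω → ℝ) (U : Ω → α) : ℝ :=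
  -∑ ω, p ω * Real.log (pr p (fun ω' => U ω' = U ω))

-- Conditional Shannon entropy `H(U | V)`.
def condEntropy {Ω α β : Type*} [Fintype Ω] (p : Ω → ℝ) (U : Ω → α) (V : Ω → β) : ℝ :=
  -∑ ω, p ω * Real.log
      (pr p (fun ω' => U ω' = U ω ∧ V ω' = V ω) / pr p (fun ω' => V ω' = V ω))

-- Mutual information `I(U ; V)`.
def mutualInfo {Ω α β : Type*} [Fintype Ω] (p : Ω → ℝ) (U : Ω → α) (V : Ω → β) : ℝ :=
  ∑ ω, p ω * Real.log
      (pr p (fun ω' => U ω' = U ω ∧ V ω' = V ω) /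
        (pr p (fun ω' => U ω' = U ω) * pr p (fun ω' => V ω' = V ω)))

-- Conditional mutual information `I(U ; V | W)`.
def condMutualInfo {Ω α β γ : Type*} [Fintype Ω] (p : Ω → ℝ)
    (U : Ω → α) (V : Ω → β) (W : Ω → γ) : ℝ :=
  ∑ ω, p ω * Real.log
      ((pr p (fun ω' => U ω' = U ω ∧ V ω' = V ω ∧ W ω' = W ω) *
          pr p (fun ω' => W ω' = W ω)) /
        (pr p (fun ω' => U ω' = U ω ∧ W ω' = W ω) *
          pr p (fun ω' => V ω' = V ω ∧ W ω' = W ω)))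

-- The prefix `(X_0, …, X_{i-1})` of a random sequence `X`.
def prefixSeq {Ω 𝒳 : Type*} (X : Ω → ℕ → 𝒳) (i : ℕ) : Ω → (Fin i → 𝒳) :=
  fun ω j => X ω (j : ℕ)

-- Directed information `I(X^n → Y^n) = ∑_{i=1}^n I(X^i ; Y_i | Y^{i-1})` (0-indexed).
def directedInfo {Ω 𝒳 𝒴 : Type*} [Fintype Ω] (p : Ω → ℝ)
    (X : Ω → ℕ → 𝒳) (Y : Ω → ℕ → 𝒴) (n : ℕ) : ℝ :=
  ∑ i ∈ Finset.range n,
    condMutualInfo p (prefixSeq X (i + 1)) (fun ω => Y ω i) (prefixSeq Y i)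


-- Auxiliary lemmas -----------------------------------------------------------

lemma pr_congr {Ω : Type*} [Fintype Ω] (p : Ω → ℝ) {E F : Ω → Prop}
    (h : ∀ ω, E ω ↔ F ω) : pr p E = pr p F := by
  unfold pr
  refine Finset.sum_congr rfl fun ω _ => ?_
  classical
  simp only [h ω]

lemma le_pr {Ω : Type*} [Fintype Ω] (p : Ω → ℝ) (hp0 : ∀ ω, 0 ≤ p ω)
    {E : Ω → Prop} {ω : Ω} (hE : E ω) : p ω ≤ pr p E := by
  classical
  unfold pr
  have h1 : ∀ i ∈ Finset.univ, (0:ℝ) ≤ if E i then p i else 0 := by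
    intro i _
    by_cases h : E i <;> simp [h, hp0 i]
  have := Finset.single_le_sum h1 (Finset.mem_univ ω)
  simpa [hE] using this

lemma prefix_zero {Ω 𝒳 : Type*} (X : Ω → ℕ → 𝒳) (ω' ω : Ω) :
    prefixSeq X 0 ω' = prefixSeq X 0 ω := funext fun j => j.elim0

lemma prefix_succ_iff {Ω 𝒳 : Type*} (X : Ω → ℕ → 𝒳) (i : ℕ) (ω' ω : Ω) :
    prefixSeq X (i+1) ω' = prefixSeq X (i+1) ω ↔
      (prefixSeq X i ω' = prefixSeq X i ω ∧ X ω' i = X ω i) := by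
  constructor
  · intro h
    refine ⟨funext fun j => ?_, ?_⟩
    · exact congrFun h j.castSucc
    · exact congrFun h (Fin.last i)
  · rintro ⟨h1, h2⟩
    funext j
    refine Fin.lastCases ?_ ?_ j
    · exact h2
    · intro k
      exact congrFun h1 k

def prF {Ω 𝒳 𝒴 : Type*} [Fintype Ω] (p : Ω → ℝ)
    (X : Ω → ℕ → 𝒳) (Y : Ω → ℕ → 𝒴) (j k : ℕ) (ω : Ω) : ℝ :=
  pr p (fun ω' => prefixSeq X j ω' = prefixSeq X j ω ∧ prefixSeq Y k ω' = prefixSeq Y k ω)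

lemma prF_pos {Ω 𝒳 𝒴 : Type*} [Fintype Ω] (p : Ω → ℝ) (hp0 : ∀ ω, 0 ≤ p ω)
    (X : Ω → ℕ → 𝒳) (Y : Ω → ℕ → 𝒴) (j k : ℕ) {ω : Ω} (hω : 0 < p ω) :
    0 < prF p X Y j k ω :=
  lt_of_lt_of_le hω (le_pr p hp0 ⟨rfl, rfl⟩)

lemma prF_zero_zero {Ω 𝒳 𝒴 : Type*} [Fintype Ω] (p : Ω → ℝ) (hp1 : ∑ ω, p ω = 1)
    (X : Ω → ℕ → 𝒳) (Y : Ω → ℕ → 𝒴) (ω : Ω) : prF p X Y 0 0 ω = 1 := by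
  have : prF p X Y 0 0 ω = pr p (fun _ => True) :=
    pr_congr p fun ω' => by simp [prefix_zero X ω' ω, prefix_zero Y ω' ω]
  rw [this]
  unfold pr
  simpa using hp1

lemma telescope (L : ℕ → ℕ → ℝ) (h0 : L 0 0 = 0) (n : ℕ) :
    ∑ i ∈ Finset.range n,
      ((L i (i+1) + L 0 i - (L i i + L 0 (i+1))) +
       (L (i+1) i + L i 0 - (L i i + L (i+1) 0)) +
       (L (i+1) (i+1) + L i i - (L (i+1) i + L i (i+1)))) =
    L n n - (L n 0 + L 0 n) := by
  induction n with
  | zero => simp [h0]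
  | succ n ih => rw [Finset.sum_range_succ, ih]; ring

/-- three-term decomposition of mutual information:
`I(X^n; Y^n) = I(DX^n→Y^n) + I(DY^n→X^n) + I(X^n→Y^n‖DX^n)`. -/
theorem mutualInfo_three_term_decomposition
    {Ω 𝒳 𝒴 : Type*} [Fintype Ω] [Fintype 𝒳] [Fintype 𝒴]
    (p : Ω → ℝ) (hp0 : ∀ ω, 0 ≤ p ω) (hp1 : ∑ ω, p ω = 1)
    (X : Ω → ℕ → 𝒳) (Y : Ω → ℕ → 𝒴) (n : ℕ) :
    mutualInfo p (prefixSeq X n) (prefixSeq Y n) =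
      (∑ i ∈ Finset.range n,
          condMutualInfo p (prefixSeq X i) (fun ω => Y ω i) (prefixSeq Y i)) +
        (∑ i ∈ Finset.range n,
          condMutualInfo p (prefixSeq Y i) (fun ω => X ω i) (prefixSeq X i)) +
        ∑ i ∈ Finset.range n,
          condMutualInfo p (fun ω => X ω i) (fun ω => Y ω i)
            (fun ω => (prefixSeq X i ω, prefixSeq Y i ω)) := by
  classical
  have hM : mutualInfo p (prefixSeq X n) (prefixSeq Y n) =
      ∑ ω, p ω * Real.log (prF p X Y n n ω / (prF p X Y n 0 ω * prF p X Y 0 n ω)) := by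
    unfold mutualInfo
    refine Finset.sum_congr rfl fun ω _ => ?_
    rw [show pr p (fun ω' => prefixSeq X n ω' = prefixSeq X n ω) = prF p X Y n 0 ω from
          pr_congr p fun ω' => by simp [prefix_zero Y ω' ω],
        show pr p (fun ω' => prefixSeq Y n ω' = prefixSeq Y n ω) = prF p X Y 0 n ω from
          pr_congr p fun ω' => by simp [prefix_zero X ω' ω],
        show pr p (fun ω' => prefixSeq X n ω' = prefixSeq X n ω ∧
              prefixSeq Y n ω' = prefixSeq Y n ω) = prF p X Y n n ω from rfl]
  have hA : (∑ i ∈ Finset.range n,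
        condMutualInfo p (prefixSeq X i) (fun ω => Y ω i) (prefixSeq Y i)) =
      ∑ ω, ∑ i ∈ Finset.range n, p ω * Real.log
        ((prF p X Y i (i+1) ω * prF p X Y 0 i ω) /
          (prF p X Y i i ω * prF p X Y 0 (i+1) ω)) := by
    rw [Finset.sum_comm]
    refine Finset.sum_congr rfl fun i _ => ?_
    unfold condMutualInfo
    refine Finset.sum_congr rfl fun ω _ => ?_
    rw [show pr p (fun ω' => prefixSeq X i ω' = prefixSeq X i ω ∧ Y ω' i = Y ω i ∧
            prefixSeq Y i ω' = prefixSeq Y i ω) = prF p X Y i (i+1) ω from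
          pr_congr p fun ω' => by rw [prefix_succ_iff Y i ω' ω]; tauto,
        show pr p (fun ω' => prefixSeq Y i ω' = prefixSeq Y i ω) = prF p X Y 0 i ω from
          pr_congr p fun ω' => by simp [prefix_zero X ω' ω],
        show pr p (fun ω' => prefixSeq X i ω' = prefixSeq X i ω ∧
            prefixSeq Y i ω' = prefixSeq Y i ω) = prF p X Y i i ω from rfl,
        show pr p (fun ω' => Y ω' i = Y ω i ∧ prefixSeq Y i ω' = prefixSeq Y i ω) =
            prF p X Y 0 (i+1) ω from
          pr_congr p fun ω' => by
            rw [prefix_succ_iff Y i ω' ω]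
            simp [prefix_zero X ω' ω]; tauto]
  have hB : (∑ i ∈ Finset.range n,
        condMutualInfo p (prefixSeq Y i) (fun ω => X ω i) (prefixSeq X i)) =
      ∑ ω, ∑ i ∈ Finset.range n, p ω * Real.log
        ((prF p X Y (i+1) i ω * prF p X Y i 0 ω) /
          (prF p X Y i i ω * prF p X Y (i+1) 0 ω)) := by
    rw [Finset.sum_comm]
    refine Finset.sum_congr rfl fun i _ => ?_
    unfold condMutualInfo
    refine Finset.sum_congr rfl fun ω _ => ?_
    rw [show pr p (fun ω' => prefixSeq Y i ω' = prefixSeq Y i ω ∧ X ω' i = X ω i ∧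
            prefixSeq X i ω' = prefixSeq X i ω) = prF p X Y (i+1) i ω from
          pr_congr p fun ω' => by rw [prefix_succ_iff X i ω' ω]; tauto,
        show pr p (fun ω' => prefixSeq X i ω' = prefixSeq X i ω) = prF p X Y i 0 ω from
          pr_congr p fun ω' => by simp [prefix_zero Y ω' ω],
        show pr p (fun ω' => prefixSeq Y i ω' = prefixSeq Y i ω ∧
            prefixSeq X i ω' = prefixSeq X i ω) = prF p X Y i i ω from
          pr_congr p fun ω' => by tauto,
        show pr p (fun ω' => X ω' i = X ω i ∧ prefixSeq X i ω' = prefixSeq X i ω) =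
            prF p X Y (i+1) 0 ω from
          pr_congr p fun ω' => by
            rw [prefix_succ_iff X i ω' ω]
            simp [prefix_zero Y ω' ω]; tauto]
  have hC : (∑ i ∈ Finset.range n,
        condMutualInfo p (fun ω => X ω i) (fun ω => Y ω i)
          (fun ω => (prefixSeq X i ω, prefixSeq Y i ω))) =
      ∑ ω, ∑ i ∈ Finset.range n, p ω * Real.log
        ((prF p X Y (i+1) (i+1) ω * prF p X Y i i ω) /
          (prF p X Y (i+1) i ω * prF p X Y i (i+1) ω)) := by
    rw [Finset.sum_comm]
    refine Finset.sum_congr rfl fun i _ => ?_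
    unfold condMutualInfo
    refine Finset.sum_congr rfl fun ω _ => ?_
    rw [show pr p (fun ω' => X ω' i = X ω i ∧ Y ω' i = Y ω i ∧
            (prefixSeq X i ω', prefixSeq Y i ω') = (prefixSeq X i ω, prefixSeq Y i ω)) =
            prF p X Y (i+1) (i+1) ω from
          pr_congr p fun ω' => by
            rw [prefix_succ_iff X i ω' ω, prefix_succ_iff Y i ω' ω,
              Prod.mk.injEq]; tauto,
        show pr p (fun ω' =>
            (prefixSeq X i ω', prefixSeq Y i ω') = (prefixSeq X i ω, prefixSeq Y i ω)) =
            prF p X Y i i ω from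
          pr_congr p fun ω' => by rw [Prod.mk.injEq],
        show pr p (fun ω' => X ω' i = X ω i ∧
            (prefixSeq X i ω', prefixSeq Y i ω') = (prefixSeq X i ω, prefixSeq Y i ω)) =
            prF p X Y (i+1) i ω from
          pr_congr p fun ω' => by
            rw [prefix_succ_iff X i ω' ω, Prod.mk.injEq]; tauto,
        show pr p (fun ω' => Y ω' i = Y ω i ∧
            (prefixSeq X i ω', prefixSeq Y i ω') = (prefixSeq X i ω, prefixSeq Y i ω)) =
            prF p X Y i (i+1) ω from
          pr_congr p fun ω' => by
            rw [prefix_succ_iff Y i ω' ω, Prod.mk.injEq]; tauto]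
  rw [hM, hA, hB, hC, ← Finset.sum_add_distrib, ← Finset.sum_add_distrib]
  refine Finset.sum_congr rfl fun ω _ => ?_
  rcases (hp0 ω).eq_or_lt with h | h
  · simp [← h]
  · have hpos : ∀ j k, 0 < prF p X Y j k ω := fun j k => prF_pos p hp0 X Y j k h
    have key : Real.log (prF p X Y n n ω / (prF p X Y n 0 ω * prF p X Y 0 n ω)) =
        ∑ i ∈ Finset.range n,
          (Real.log ((prF p X Y i (i+1) ω * prF p X Y 0 i ω) /
              (prF p X Y i i ω * prF p X Y 0 (i+1) ω)) +
           Real.log ((prF p X Y (i+1) i ω * prF p X Y i 0 ω) /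
              (prF p X Y i i ω * prF p X Y (i+1) 0 ω)) +
           Real.log ((prF p X Y (i+1) (i+1) ω * prF p X Y i i ω) /
              (prF p X Y (i+1) i ω * prF p X Y i (i+1) ω))) := by
      have expand : ∀ a b c d e f g h : ℕ,
          Real.log ((prF p X Y a b ω * prF p X Y c d ω) /
            (prF p X Y e f ω * prF p X Y g h ω)) =
          Real.log (prF p X Y a b ω) + Real.log (prF p X Y c d ω) -
            (Real.log (prF p X Y e f ω) + Real.log (prF p X Y g h ω)) := by
        intro a b c d e f g h
        rw [Real.log_div (mul_pos (hpos _ _) (hpos _ _)).ne'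
              (mul_pos (hpos _ _) (hpos _ _)).ne',
            Real.log_mul (hpos _ _).ne' (hpos _ _).ne',
            Real.log_mul (hpos _ _).ne' (hpos _ _).ne']
      have htel := telescope (fun j k => Real.log (prF p X Y j k ω))
        (by simp [prF_zero_zero p hp1 X Y ω]) n
      calc Real.log (prF p X Y n n ω / (prF p X Y n 0 ω * prF p X Y 0 n ω)) =
            Real.log (prF p X Y n n ω) -
              (Real.log (prF p X Y n 0 ω) + Real.log (prF p X Y 0 n ω)) := by
              rw [Real.log_div (hpos _ _).ne'
                    (mul_pos (hpos _ _) (hpos _ _)).ne',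
                  Real.log_mul (hpos _ _).ne' (hpos _ _).ne']
        _ = _ := by
              rw [← htel]
              refine Finset.sum_congr rfl fun i _ => ?_
              rw [expand i (i+1) 0 i i i 0 (i+1), expand (i+1) i i 0 i i (i+1) 0,
                expand (i+1) (i+1) i i (i+1) i i (i+1)]
    rw [key, Finset.mul_sum, ← Finset.sum_add_distrib, ← Finset.sum_add_distrib]
    exact Finset.sum_congr rfl fun i _ => by ring
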